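/- Asymptotic spectrum (Proposition 3). For every Theorem-1 family: (1) the coefficients ζ̊_j, ẘ_j for 1 ≤ j ≤ N_B form a complete set of eigenvalues and orthonormal eigenvectors of the operator B₂, i.e. B₂ ẘ_j = ζ̊_j ẘ_j; in particular B₂ is positive definite and invertible with B₂⁻¹ > 0; (2) the coefficients ρ_j, ẘ_j for N_B+1 ≤ j ≤ N form a complete set of eigenvalues and orthonormal eigenvectors of the self-adjoint operator Ω₁, i.e. Ω₁ ẘ_j = ρ_j ẘ_j; (3) the low-loss damping coefficients are given by d_j = (ẘ_j, Θ* B₂⁻¹ Θ ẘ_j) for N_B+1 ≤ j ≤ N. -/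

import Mathlib

open Filter Asymptotics

noncomputable section

variable {H : Type*} [NormedAddCommGroup H] [InnerProductSpace ℂ H] [FiniteDimensional ℂ H]

/-- The system operator `A(β) = Ω − iβB`. -/
def sysOp (Ω B : H →L[ℂ] H) (β : ℝ) : H →L[ℂ] H :=
  Ω - (Complex.I * (β : ℂ)) • B

/-- A *Theorem-1 family* for the system operator `A(β) = Ω − iβB` in the high-loss
regime: a threshold `β₀ > 0`; an orthonormal family `ẘ_j` whose first `N_B` members
are eigenvectors of `B` in the loss subspace `H_B = ran B` with positive eigenvalues
`ζ̊_j` and whose remaining members lie in the no-loss subspace `ker B`; vectors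
`w_j^{(−1)}`; and eigenvalue/eigenvector branches `ζ_j(β)`, `w_j(β)` of `A(β)`
(forming a basis, so `A(β)` is diagonalizable for `β > β₀`) with the stated
asymptotic expansions as `β → ∞`, where `ρ_j = (ẘ_j, Ω ẘ_j)` and
`d_j = (w_j^{(−1)}, B w_j^{(−1)})`. -/
structure Thm1Family (Ω B : H →L[ℂ] H) where
  β₀ : ℝ
  β₀_pos : 0 < β₀
  w0 : Fin (Module.finrank ℂ H) → H
  ζ0 : Fin (Module.finrank ℂ H) → ℝ
  wneg : Fin (Module.finrank ℂ H) → H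
  ζ : Fin (Module.finrank ℂ H) → ℝ → ℂ
  w : Fin (Module.finrank ℂ H) → ℝ → H
  orth : Orthonormal ℂ w0
  ζ0_pos : ∀ j : Fin (Module.finrank ℂ H),
    (j : ℕ) < Module.finrank ℂ (LinearMap.range (B : H →ₗ[ℂ] H)) → 0 < ζ0 j
  eig0_high : ∀ j : Fin (Module.finrank ℂ H),
    (j : ℕ) < Module.finrank ℂ (LinearMap.range (B : H →ₗ[ℂ] H)) → B (w0 j) = (ζ0 j : ℂ) • w0 j
  eig0_low : ∀ j : Fin (Module.finrank ℂ H),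
    Module.finrank ℂ (LinearMap.range (B : H →ₗ[ℂ] H)) ≤ (j : ℕ) → B (w0 j) = 0
  eig : ∀ β : ℝ, β₀ < β → ∀ j, sysOp Ω B β (w j β) = ζ j β • w j β
  indep : ∀ β : ℝ, β₀ < β → LinearIndependent ℂ fun j => w j β
  ζ_high : ∀ j : Fin (Module.finrank ℂ H),
    (j : ℕ) < Module.finrank ℂ (LinearMap.range (B : H →ₗ[ℂ] H)) →
      (fun β : ℝ => ζ j β - (-Complex.I * (ζ0 j : ℂ) * (β : ℂ)
          + ((inner ℂ (w0 j) (Ω (w0 j)) : ℂ).re : ℂ)))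
        =O[atTop] fun β : ℝ => β⁻¹
  w_high : ∀ j : Fin (Module.finrank ℂ H),
    (j : ℕ) < Module.finrank ℂ (LinearMap.range (B : H →ₗ[ℂ] H)) →
      (fun β : ℝ => w j β - w0 j) =O[atTop] fun β : ℝ => β⁻¹
  ζ_low : ∀ j : Fin (Module.finrank ℂ H),
    Module.finrank ℂ (LinearMap.range (B : H →ₗ[ℂ] H)) ≤ (j : ℕ) →
      (fun β : ℝ => ζ j β - (((inner ℂ (w0 j) (Ω (w0 j)) : ℂ).re : ℂ)
          - Complex.I * ((inner ℂ (wneg j) (B (wneg j)) : ℂ).re : ℂ) * (β : ℂ)⁻¹))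
        =O[atTop] fun β : ℝ => (β ^ 2)⁻¹
  w_low : ∀ j : Fin (Module.finrank ℂ H),
    Module.finrank ℂ (LinearMap.range (B : H →ₗ[ℂ] H)) ≤ (j : ℕ) →
      (fun β : ℝ => w j β - (w0 j + ((β : ℂ))⁻¹ • wneg j)) =O[atTop] fun β : ℝ => (β ^ 2)⁻¹

/-- `ρ_j = (ẘ_j, Ω ẘ_j)`. -/
def Thm1Family.ρ {Ω B : H →L[ℂ] H} (F : Thm1Family Ω B)
    (j : Fin (Module.finrank ℂ H)) : ℝ :=
  (inner ℂ (F.w0 j) (Ω (F.w0 j)) : ℂ).re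

/-- `d_j = (w_j^{(−1)}, B w_j^{(−1)})`. -/
def Thm1Family.d {Ω B : H →L[ℂ] H} (F : Thm1Family Ω B)
    (j : Fin (Module.finrank ℂ H)) : ℝ :=
  (inner ℂ (F.wneg j) (B (F.wneg j)) : ℂ).re

private lemma quad_aux' {a b : ℝ} (ha : 0 ≤ a) (h : ∀ t : ℝ, 0 ≤ a * t ^ 2 + b * t) : b = 0 := by
  have hpos : (0:ℝ) < a + 1 := by linarith
  have h1 := h (-(b / (a + 1)))
  have h2 : a * (-(b / (a+1))) ^ 2 + b * (-(b / (a+1))) = -(b ^ 2 / (a + 1) ^ 2) := by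
    field_simp; ring
  rw [h2] at h1
  have h4 : (0:ℝ) < (a+1)^2 := by positivity
  have h5 : b ^ 2 ≤ 0 := by
    have h3 : b ^ 2 / (a+1)^2 ≤ 0 := by linarith
    have := (div_le_iff₀ h4).mp h3
    linarith
  have := sq_nonneg b
  nlinarith

private lemma Bx_eq_zero' (B : H →L[ℂ] H) (hB : IsSelfAdjoint B)
    (hBpos : ∀ x : H, 0 ≤ (inner ℂ x (B x) : ℂ).re) (x : H)
    (hx : (inner ℂ x (B x) : ℂ).re = 0) : B x = 0 := by
  have hsym := hB.isSymmetric.apply_clm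
  have key : ∀ t : ℝ, 0 ≤ (inner ℂ (B x) (B (B x)) : ℂ).re * t ^ 2
      + (2 * (inner ℂ (B x) (B x) : ℂ).re) * t := by
    intro t
    have h0 := hBpos (x + (t:ℂ) • B x)
    have expand : (inner ℂ (x + (t:ℂ) • B x) (B (x + (t:ℂ) • B x)) : ℂ)
        = inner ℂ x (B x) + (t:ℂ) * inner ℂ x (B (B x)) + (t:ℂ) * inner ℂ (B x) (B x)
          + (t:ℂ) * ((t:ℂ) * inner ℂ (B x) (B (B x))) := by
      simp only [map_add, map_smul, inner_add_left, inner_add_right, inner_smul_left,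
        inner_smul_right, Complex.conj_ofReal]
      ring
    rw [expand] at h0
    have hxBB : (inner ℂ x (B (B x)) : ℂ) = inner ℂ (B x) (B x) := (hsym x (B x)).symm
    rw [hxBB] at h0
    simp only [Complex.add_re, Complex.re_ofReal_mul, hx] at h0
    nlinarith [h0]
  have hb := quad_aux' (hBpos (B x)) key
  have hre : (inner ℂ (B x) (B x) : ℂ).re = 0 := by linarith
  have hn : ‖B x‖ ^ 2 = 0 := by
    rw [← hre]; exact (inner_self_eq_norm_sq (𝕜 := ℂ) (B x)).symm
  simpa using pow_eq_zero_iff (n := 2) (by norm_num) |>.mp hn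

private lemma range_ker_zero' (B : H →L[ℂ] H) (hB : IsSelfAdjoint B) (x : H)
    (hx : x ∈ LinearMap.range (B : H →ₗ[ℂ] H)) (hx0 : B x = 0) : x = 0 := by
  obtain ⟨u, rfl⟩ := hx
  have : (inner ℂ (B u) (B u) : ℂ) = 0 := by
    rw [hB.isSymmetric.apply_clm u (B u), show B (B u) = 0 from hx0, inner_zero_right]
  exact inner_self_eq_zero.mp this

private lemma perp_ker' (B : H →L[ℂ] H) (hB : IsSelfAdjoint B) (v : H)
    (hv : v ∈ (LinearMap.range (B : H →ₗ[ℂ] H))ᗮ) : B v = 0 := by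
  have : (inner ℂ (B v) (B v) : ℂ) = 0 := by
    rw [hB.isSymmetric.apply_clm v (B v)]
    have h := (Submodule.mem_orthogonal _ v).mp hv _ ⟨B v, rfl⟩
    rw [← inner_conj_symm, show inner ℂ (B (B v)) v = 0 from h, map_zero]
  exact inner_self_eq_zero.mp this

private lemma low_loss_key' (Ω B : H →L[ℂ] H) (F : Thm1Family Ω B)
    (j : Fin (Module.finrank ℂ H))
    (hj : Module.finrank ℂ (LinearMap.range (B : H →ₗ[ℂ] H)) ≤ (j : ℕ)) :
    Ω (F.w0 j) = (F.ρ j : ℂ) • F.w0 j + Complex.I • B (F.wneg j) := by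
  have hB0 : B (F.w0 j) = 0 := F.eig0_low j hj
  have hinv2 : Filter.Tendsto (fun β : ℝ => ((β:ℝ) ^ 2)⁻¹) atTop (nhds 0) := by
    apply tendsto_inv_atTop_zero.comp
    exact tendsto_pow_atTop (by norm_num)
  have hinvC : Filter.Tendsto (fun β : ℝ => ((β:ℂ))⁻¹) atTop (nhds 0) := by
    have h := (Complex.continuous_ofReal.tendsto 0).comp tendsto_inv_atTop_zero
    simpa [Function.comp_def, Complex.ofReal_inv] using h
  have herr : Filter.Tendsto (fun β : ℝ => F.w j β - (F.w0 j + ((β:ℂ))⁻¹ • F.wneg j))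
      atTop (nhds 0) := (F.w_low j hj).trans_tendsto hinv2
  have hw_lim : Filter.Tendsto (fun β : ℝ => F.w j β) atTop (nhds (F.w0 j)) := by
    have h2 : Filter.Tendsto (fun β : ℝ => ((β:ℂ))⁻¹ • F.wneg j) atTop (nhds 0) := by
      simpa using hinvC.smul_const (F.wneg j)
    have h4 : Filter.Tendsto (fun β : ℝ => F.w j β - F.w0 j) atTop (nhds (0 + 0)) :=
      (herr.add h2).congr fun β => by abel
    rw [add_zero] at h4
    exact tendsto_sub_nhds_zero_iff.mp h4
  have hζ_lim : Filter.Tendsto (F.ζ j) atTop (nhds ((F.ρ j : ℂ))) := by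
    have h1 : Filter.Tendsto (fun β : ℝ => F.ζ j β - (((F.ρ j : ℝ) : ℂ)
        - Complex.I * ((F.d j : ℝ) : ℂ) * ((β:ℂ))⁻¹)) atTop (nhds 0) :=
      (F.ζ_low j hj).trans_tendsto hinv2
    have h2 : Filter.Tendsto (fun β : ℝ => ((F.ρ j : ℝ) : ℂ)
        - Complex.I * ((F.d j : ℝ) : ℂ) * ((β:ℂ))⁻¹) atTop (nhds ((F.ρ j : ℂ))) := by
      have := (hinvC.const_mul (Complex.I * ((F.d j : ℝ) : ℂ))).const_sub ((F.ρ j : ℝ) : ℂ)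
      simpa [mul_assoc] using this
    have h3 := h1.add h2
    simp only [sub_add_cancel, zero_add] at h3
    exact h3
  have hb3 : Filter.Tendsto (fun β : ℝ => (Complex.I * (β:ℂ)) • B (F.w j β)) atTop
      (nhds (Complex.I • B (F.wneg j))) := by
    have hBerr : (fun β : ℝ => B (F.w j β - (F.w0 j + ((β:ℂ))⁻¹ • F.wneg j)))
        =O[atTop] fun β : ℝ => ((β:ℝ) ^ 2)⁻¹ :=
      (B.isBigO_comp _ atTop).trans (F.w_low j hj)
    have hIβ : (fun β : ℝ => Complex.I * (β:ℂ)) =O[atTop] fun β : ℝ => β := by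
      apply IsBigO.of_bound 1
      filter_upwards with β
      simp
    have hsm : (fun β : ℝ => (Complex.I * (β:ℂ)) •
        B (F.w j β - (F.w0 j + ((β:ℂ))⁻¹ • F.wneg j))) =O[atTop]
        fun β : ℝ => β • ((β:ℝ) ^ 2)⁻¹ := hIβ.smul hBerr
    have hto : Filter.Tendsto (fun β : ℝ => β • ((β:ℝ) ^ 2)⁻¹) atTop (nhds 0) := by
      apply tendsto_inv_atTop_zero.congr'
      filter_upwards [Filter.eventually_ge_atTop (1:ℝ)] with β hβ
      have hβ0 : β ≠ 0 := by linarith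
      field_simp [smul_eq_mul]
      rw [smul_eq_mul]
      field_simp
    have hmain : Filter.Tendsto (fun β : ℝ => (Complex.I * (β:ℂ)) •
        B (F.w j β - (F.w0 j + ((β:ℂ))⁻¹ • F.wneg j))) atTop (nhds 0) :=
      hsm.trans_tendsto hto
    have hsplit : ∀ᶠ β : ℝ in atTop, (Complex.I * (β:ℂ)) • B (F.w j β)
        = (Complex.I * (β:ℂ)) • B (F.w j β - (F.w0 j + ((β:ℂ))⁻¹ • F.wneg j))
          + Complex.I • B (F.wneg j) := by
      filter_upwards [Filter.eventually_ge_atTop (1:ℝ)] with β hβ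
      have hβ0 : (β:ℂ) ≠ 0 := by
        simp only [ne_eq, Complex.ofReal_eq_zero]; linarith
      rw [map_sub, map_add, map_smul, hB0, zero_add, smul_sub, smul_smul]
      rw [mul_assoc, mul_inv_cancel₀ hβ0, mul_one]
      abel
    have h4 := hmain.add (tendsto_const_nhds (x := Complex.I • B (F.wneg j)))
    rw [zero_add] at h4
    exact h4.congr' (hsplit.mono fun β h => h.symm)
  have heq : ∀ᶠ β : ℝ in atTop, F.ζ j β • F.w j β - Ω (F.w j β)
      + (Complex.I * (β:ℂ)) • B (F.w j β) = 0 := by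
    filter_upwards [Filter.eventually_gt_atTop F.β₀] with β hβ
    have h5 := F.eig β hβ j
    simp only [sysOp, ContinuousLinearMap.sub_apply, ContinuousLinearMap.smul_apply] at h5
    rw [← h5]
    abel
  have hΩ_lim : Filter.Tendsto (fun β : ℝ => Ω (F.w j β)) atTop (nhds (Ω (F.w0 j))) :=
    (Ω.continuous.tendsto _).comp hw_lim
  have hfull : Filter.Tendsto (fun β : ℝ => F.ζ j β • F.w j β - Ω (F.w j β)
      + (Complex.I * (β:ℂ)) • B (F.w j β)) atTop
      (nhds ((F.ρ j : ℂ) • F.w0 j - Ω (F.w0 j) + Complex.I • B (F.wneg j))) :=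
    ((hζ_lim.smul hw_lim).sub hΩ_lim).add hb3
  have hzero : Filter.Tendsto (fun β : ℝ => F.ζ j β • F.w j β - Ω (F.w j β)
      + (Complex.I * (β:ℂ)) • B (F.w j β)) atTop (nhds 0) :=
    tendsto_const_nhds.congr' (heq.mono fun β h => h.symm)
  have hc : (F.ρ j : ℂ) • F.w0 j - Ω (F.w0 j) + Complex.I • B (F.wneg j) = 0 :=
    tendsto_nhds_unique hfull hzero
  have h6 : (F.ρ j : ℂ) • F.w0 j + Complex.I • B (F.wneg j) - Ω (F.w0 j) = 0 := by
    rw [← hc]; abel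
  exact (sub_eq_zero.mp h6).symm


private lemma w0_perp' (Ω B : H →L[ℂ] H) (hB : IsSelfAdjoint B) (F : Thm1Family Ω B)
    (j : Fin (Module.finrank ℂ H))
    (hj : Module.finrank ℂ (LinearMap.range (B : H →ₗ[ℂ] H)) ≤ (j : ℕ)) :
    F.w0 j ∈ (LinearMap.range (B : H →ₗ[ℂ] H))ᗮ := by
  rw [Submodule.mem_orthogonal]
  rintro u ⟨t, rfl⟩
  show (inner ℂ (B t) (F.w0 j) : ℂ) = 0
  rw [hB.isSymmetric.apply_clm t (F.w0 j), F.eig0_low j hj, inner_zero_right]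

private lemma proj_eq' (Ω B : H →L[ℂ] H) (hB : IsSelfAdjoint B) (F : Thm1Family Ω B)
    (j : Fin (Module.finrank ℂ H))
    (hj : Module.finrank ℂ (LinearMap.range (B : H →ₗ[ℂ] H)) ≤ (j : ℕ)) :
    (((LinearMap.range (B : H →ₗ[ℂ] H)).orthogonalProjectionOnto (Ω (F.w0 j))) : H)
      = Complex.I • B (F.wneg j) := by
  have hperp := w0_perp' Ω B hB F j hj
  have hmem : B (F.wneg j) ∈ LinearMap.range (B : H →ₗ[ℂ] H) := ⟨F.wneg j, rfl⟩
  rw [low_loss_key' Ω B F j hj, map_add, map_smul, map_smul]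
  push_cast
  have hP : ((LinearMap.range (B : H →ₗ[ℂ] H)).orthogonalProjectionOnto (B (F.wneg j)) : H)
      = B (F.wneg j) := Submodule.starProjection_eq_self_iff.mpr hmem
  rw [Submodule.orthogonalProjectionOnto_apply_of_mem_orthogonal hperp, hP]
  simp

/-- **Proposition 3: asymptotic spectrum.**
For every Theorem-1 family:
(1) `B₂ ẘ_j = ζ̊_j ẘ_j` for the high-loss indices (the `ẘ_j` being a complete
orthonormal eigenbasis of `B₂` on `H_B`), and `B₂` is positive definite — hence
invertible, with positive definite inverse — on `H_B = ran B`;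
(2) for the low-loss indices, `Ω₁ ẘ_j = ρ_j ẘ_j`, i.e.
`Ω ẘ_j − P_B Ω ẘ_j = ρ_j ẘ_j`;
(3) `d_j = (ẘ_j, Θ* B₂⁻¹ Θ ẘ_j)`, expressed via the unique `y ∈ ran B` with
`B y = P_B Ω ẘ_j`, as `d_j = (P_B Ω ẘ_j, y)`. -/
theorem statement5
    (Ω B : H →L[ℂ] H) (hΩ : IsSelfAdjoint Ω) (hB : IsSelfAdjoint B)
    (hBpos : ∀ x : H, 0 ≤ (inner ℂ x (B x) : ℂ).re)
    (hNB_pos : 0 < Module.finrank ℂ (LinearMap.range (B : H →ₗ[ℂ] H)))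
    (hNB_lt : Module.finrank ℂ (LinearMap.range (B : H →ₗ[ℂ] H)) < Module.finrank ℂ H)
    (F : Thm1Family Ω B) :
    (∀ j : Fin (Module.finrank ℂ H),
      (j : ℕ) < Module.finrank ℂ (LinearMap.range (B : H →ₗ[ℂ] H)) →
        B (F.w0 j) = (F.ζ0 j : ℂ) • F.w0 j) ∧
    (∀ x : H, x ∈ LinearMap.range (B : H →ₗ[ℂ] H) → x ≠ 0 → 0 < (inner ℂ x (B x) : ℂ).re) ∧
    (∀ z : H, z ∈ LinearMap.range (B : H →ₗ[ℂ] H) → ∃! y : H, y ∈ LinearMap.range (B : H →ₗ[ℂ] H) ∧ B y = z) ∧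
    (∀ j : Fin (Module.finrank ℂ H),
      Module.finrank ℂ (LinearMap.range (B : H →ₗ[ℂ] H)) ≤ (j : ℕ) →
        Ω (F.w0 j) - ((LinearMap.range (B : H →ₗ[ℂ] H)).orthogonalProjectionOnto (Ω (F.w0 j)) : H)
          = (F.ρ j : ℂ) • F.w0 j) ∧
    (∀ j : Fin (Module.finrank ℂ H),
      Module.finrank ℂ (LinearMap.range (B : H →ₗ[ℂ] H)) ≤ (j : ℕ) →
        ∀ y : H, y ∈ LinearMap.range (B : H →ₗ[ℂ] H) →
          B y = ((LinearMap.range (B : H →ₗ[ℂ] H)).orthogonalProjectionOnto (Ω (F.w0 j)) : H) →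
          (F.d j : ℂ)
            = inner ℂ (((LinearMap.range (B : H →ₗ[ℂ] H)).orthogonalProjectionOnto (Ω (F.w0 j)) : H)) y) := by
  constructor
  · exact F.eig0_high
  refine ⟨?_, ?_, ?_, ?_⟩
  · -- positive definiteness on the range
    intro x hx hx0
    rcases (hBpos x).eq_or_lt with h | h
    · exact absurd (range_ker_zero' B hB x hx (Bx_eq_zero' B hB hBpos x h.symm)) hx0
    · exact h
  · -- unique solvability of B y = z on the range
    rintro z ⟨u, rfl⟩
    refine ⟨(((LinearMap.range (B : H →ₗ[ℂ] H)).orthogonalProjectionOnto u : H)), ⟨SetLike.coe_mem _, ?_⟩, ?_⟩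
    · have hmem : u - ((LinearMap.range (B : H →ₗ[ℂ] H)).orthogonalProjectionOnto u : H)
          ∈ (LinearMap.range (B : H →ₗ[ℂ] H))ᗮ := Submodule.sub_starProjection_mem_orthogonal u
      have h0 : B (u - ((LinearMap.range (B : H →ₗ[ℂ] H)).orthogonalProjectionOnto u : H)) = 0 :=
        perp_ker' B hB _ hmem
      rw [map_sub, sub_eq_zero] at h0
      exact h0.symm
    · rintro y' ⟨hy', hBy'⟩
      have hsub : y' - ((LinearMap.range (B : H →ₗ[ℂ] H)).orthogonalProjectionOnto u : H)
          ∈ LinearMap.range (B : H →ₗ[ℂ] H) := by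
        exact Submodule.sub_mem _ hy' (SetLike.coe_mem _)
      have hB0 : B (y' - ((LinearMap.range (B : H →ₗ[ℂ] H)).orthogonalProjectionOnto u : H)) = 0 := by
        have hmem : u - ((LinearMap.range (B : H →ₗ[ℂ] H)).orthogonalProjectionOnto u : H)
            ∈ (LinearMap.range (B : H →ₗ[ℂ] H))ᗮ := Submodule.sub_starProjection_mem_orthogonal u
        have h0 : B (u - ((LinearMap.range (B : H →ₗ[ℂ] H)).orthogonalProjectionOnto u : H)) = 0 :=
          perp_ker' B hB _ hmem
        rw [map_sub, sub_eq_zero] at h0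
        rw [map_sub, hBy', show (B : H →ₗ[ℂ] H) u = B u from rfl, h0, sub_self]
      have := range_ker_zero' B hB _ hsub hB0
      rwa [sub_eq_zero] at this
  · -- the compression of Ω to the no-loss subspace
    intro j hj
    rw [proj_eq' Ω B hB F j hj, low_loss_key' Ω B F j hj, add_sub_cancel_right]
  · -- the damping coefficients
    intro j hj y hy hBy
    rw [proj_eq' Ω B hB F j hj] at hBy ⊢
    have hreal : (inner ℂ (F.wneg j) (B (F.wneg j)) : ℂ) = ((F.d j : ℝ) : ℂ) := by
      have h1 : (starRingEnd ℂ) (inner ℂ (F.wneg j) (B (F.wneg j)) : ℂ)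
          = (inner ℂ (F.wneg j) (B (F.wneg j)) : ℂ) := by
        rw [inner_conj_symm, hB.isSymmetric.apply_clm]
      exact (Complex.conj_eq_iff_re.mp h1).symm
    calc ((F.d j : ℝ) : ℂ) = inner ℂ (F.wneg j) (B (F.wneg j)) := hreal.symm
      _ = -Complex.I * (Complex.I * inner ℂ (F.wneg j) (B (F.wneg j))) := by
          rw [← mul_assoc, neg_mul, Complex.I_mul_I, neg_neg, one_mul]
      _ = -Complex.I * inner ℂ (F.wneg j) (Complex.I • B (F.wneg j)) := by
          rw [inner_smul_right]
      _ = -Complex.I * inner ℂ (F.wneg j) (B y) := by rw [hBy]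
      _ = -Complex.I * inner ℂ (B (F.wneg j)) y := by rw [hB.isSymmetric.apply_clm]
      _ = inner ℂ (Complex.I • B (F.wneg j)) y := by
          rw [inner_smul_left, Complex.conj_I, neg_mul]
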